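/- arXiv:1801.09366 — 6 statements merged into one kernel-verified Lean document; each statement's English description precedes it below -/
import Mathlib

section
/- If B ∈ ℝ^{s×n} has rank s and the quadratic form x ↦ xᵀ(AᵀΣ_{pq}A)x is positive for all nonzero x in the null space of B, then the (s+m+n)×(s+m+n) block matrix 𝒜 = [[0,0,B],[0,Σ_{pq},A],[Bᵀ,Aᵀ,0]] is invertible. -/
open Matrix

lemma transpose_mulVec_injective {s n : ℕ} (B : Matrix (Fin s) (Fin n) ℝ)
    (hrank : B.rank = s) : ∀ l : Fin s → ℝ, Bᵀ *ᵥ l = 0 → l = 0 := by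
  rw [← Matrix.ker_mulVecLin_eq_bot_iff]
  have h1 := LinearMap.finrank_range_add_finrank_ker (Bᵀ.mulVecLin)
  have h2 : Bᵀ.rank = s := by rw [Matrix.rank_transpose]; exact hrank
  rw [Matrix.rank] at h2
  rw [h2] at h1
  simp only [Module.finrank_pi, Fintype.card_fin] at h1
  have : Module.finrank ℝ (LinearMap.ker Bᵀ.mulVecLin) = 0 := by omega
  exact Submodule.finrank_eq_zero.mp this

/-- If `B ∈ ℝ^{s×n}` has rank `s` and `xᵀ(AᵀΣ_{pq}A)x > 0` for every nonzero `x` in the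
null space of `B`, then the block matrix `𝒜 = [[0,0,B],[0,Σ_{pq},A],[Bᵀ,Aᵀ,0]]` of size
`(s+m+n) × (s+m+n)` (with `m = p + q`) is invertible. -/
theorem augmented_matrix_invertible (p q n s : ℕ) (hmn : n ≤ p + q)
    (A : Matrix (Fin p ⊕ Fin q) (Fin n) ℝ) (B : Matrix (Fin s) (Fin n) ℝ)
    (Sig : Matrix (Fin p ⊕ Fin q) (Fin p ⊕ Fin q) ℝ)
    (hSig : Sig = Matrix.fromBlocks (1 : Matrix (Fin p) (Fin p) ℝ) 0 0
      (-(1 : Matrix (Fin q) (Fin q) ℝ)))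
    (hrank : B.rank = s)
    (hpos : ∀ x : Fin n → ℝ, B.mulVec x = 0 → x ≠ 0 →
      0 < x ⬝ᵥ (Aᵀ * Sig * A).mulVec x) :
    IsUnit (Matrix.fromBlocks
      (Matrix.fromBlocks (0 : Matrix (Fin s) (Fin s) ℝ) 0 0 Sig)
      (Matrix.fromRows B A)
      (Matrix.fromCols Bᵀ Aᵀ)
      (0 : Matrix (Fin n) (Fin n) ℝ)) := by
  have hSig2 : Sig * Sig = 1 := by
    rw [hSig, Matrix.fromBlocks_multiply]
    simp [Matrix.fromBlocks_one]
  rw [← Matrix.mulVec_injective_iff_isUnit]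
  rw [← Matrix.coe_mulVecLin, ← LinearMap.ker_eq_bot,
    Matrix.ker_mulVecLin_eq_bot_iff]
  intro v hv
  set l : Fin s → ℝ := fun i => v (Sum.inl (Sum.inl i)) with hl
  set z : (Fin p ⊕ Fin q) → ℝ := fun i => v (Sum.inl (Sum.inr i)) with hz
  set x : Fin n → ℝ := fun j => v (Sum.inr j) with hx
  have hveq : v = Sum.elim (Sum.elim l z) x := by
    funext i
    rcases i with (i | i) | j <;> rfl
  rw [hveq] at hv
  rw [Matrix.fromBlocks_mulVec] at hv
  simp only [Sum.elim_comp_inl, Sum.elim_comp_inr] at hv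
  rw [Matrix.fromBlocks_mulVec, Matrix.fromRows_mulVec,
    Matrix.fromCols_mulVec_sumElim] at hv
  simp only [Sum.elim_comp_inl, Sum.elim_comp_inr] at hv
  have h1 : B *ᵥ x = 0 := by
    funext i
    have := congrFun hv (Sum.inl (Sum.inl i))
    simpa using this
  have h2 : Sig *ᵥ z + A *ᵥ x = 0 := by
    funext i
    have := congrFun hv (Sum.inl (Sum.inr i))
    simpa using this
  have h3 : Bᵀ *ᵥ l + Aᵀ *ᵥ z = 0 := by
    funext j
    have := congrFun hv (Sum.inr j)
    simpa using this
  -- A x = - Sig z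
  have hAx : A *ᵥ x = -(Sig *ᵥ z) := by
    have := h2; linear_combination (norm := module) this
  -- quadratic form is zero
  have hquad : x ⬝ᵥ (Aᵀ * Sig * A) *ᵥ x = 0 := by
    have hSigAx : Sig *ᵥ (A *ᵥ x) = -z := by
      rw [hAx, Matrix.mulVec_neg, Matrix.mulVec_mulVec, hSig2, Matrix.one_mulVec]
    have hAtz : Aᵀ *ᵥ z = -(Bᵀ *ᵥ l) := by
      linear_combination (norm := module) h3
    calc x ⬝ᵥ (Aᵀ * Sig * A) *ᵥ x
        = x ⬝ᵥ Aᵀ *ᵥ (Sig *ᵥ (A *ᵥ x)) := by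
          rw [Matrix.mulVec_mulVec, Matrix.mulVec_mulVec, Matrix.mul_assoc]
      _ = x ⬝ᵥ Aᵀ *ᵥ (-z) := by rw [hSigAx]
      _ = -(x ⬝ᵥ Aᵀ *ᵥ z) := by rw [Matrix.mulVec_neg, dotProduct_neg]
      _ = x ⬝ᵥ Bᵀ *ᵥ l := by rw [hAtz, dotProduct_neg, neg_neg]
      _ = (B *ᵥ x) ⬝ᵥ l := by
          rw [Matrix.dotProduct_mulVec, Matrix.vecMul_transpose]
      _ = 0 := by rw [h1, zero_dotProduct]
  have hx0 : x = 0 := by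
    by_contra hxne
    exact absurd hquad (ne_of_gt (hpos x h1 hxne))
  have hz0 : z = 0 := by
    have hSz : Sig *ᵥ z = 0 := by
      rw [hx0, Matrix.mulVec_zero, add_zero] at h2
      exact h2
    have : Sig *ᵥ (Sig *ᵥ z) = 0 := by rw [hSz, Matrix.mulVec_zero]
    rwa [Matrix.mulVec_mulVec, hSig2, Matrix.one_mulVec] at this
  have hl0 : l = 0 := by
    apply transpose_mulVec_injective B hrank
    rw [hz0, Matrix.mulVec_zero, add_zero] at h3
    exact h3
  rw [hveq, hl0, hz0, hx0]
  funext i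
  rcases i with (i | i) | j <;> rfl
end

section
/- Under the conditions rank(B)=s and xᵀAᵀΣ_{pq}Ax > 0 for all nonzero x ∈ N(B), a vector x solves the ILSE problem min_x (b-Ax)ᵀΣ_{pq}(b-Ax) subject to Bx=d if and only if Bx=d and there exists ξ ∈ ℝ^s with AᵀΣ_{pq}(b-Ax) = Bᵀξ. -/
open Matrix RealInnerProductSpace

private lemma ILSE_key (n s : ℕ) (B : Matrix (Fin s) (Fin n) ℝ) (g : Fin n → ℝ)
    (hg : ∀ h : Fin n → ℝ, B.mulVec h = 0 → h ⬝ᵥ g = 0) :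
    ∃ ξ : Fin s → ℝ, Bᵀ.mulVec ξ = g := by
  let T : EuclideanSpace ℝ (Fin s) →ₗ[ℝ] EuclideanSpace ℝ (Fin n) :=
    Matrix.toEuclideanLin Bᵀ
  have hT : ∀ ξ : Fin s → ℝ, T (WithLp.toLp 2 ξ) = WithLp.toLp 2 (Bᵀ.mulVec ξ) := fun ξ => rfl
  have hinner : ∀ u v : EuclideanSpace ℝ (Fin n), ⟪u, v⟫ = dotProduct (u : Fin n → ℝ) v := by
    intro u v
    simp [PiLp.inner_apply, dotProduct, RCLike.inner_apply, mul_comm]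
  set R := LinearMap.range T with hR
  have hmem : (WithLp.toLp 2 g : EuclideanSpace ℝ (Fin n)) ∈ Rᗮᗮ := by
    intro v hv
    have hv' : ∀ ξ : Fin s → ℝ, (Bᵀ.mulVec ξ) ⬝ᵥ v = 0 := by
      intro ξ
      have := hv (T (WithLp.toLp 2 ξ)) ⟨WithLp.toLp 2 ξ, rfl⟩
      rwa [hinner, hT] at this
    have hBv : B.mulVec v = 0 := by
      have h2 := hv' (B.mulVec v)
      have h3 : (B.mulVec v) ⬝ᵥ (B.mulVec v) = 0 := by
        have : (Bᵀ.mulVec (B.mulVec v)) ⬝ᵥ v = (B.mulVec v) ⬝ᵥ (B.mulVec v) := by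
          rw [Matrix.mulVec_transpose, ← Matrix.dotProduct_mulVec]
        rw [← this]; exact h2
      exact dotProduct_self_eq_zero.mp h3
    rw [hinner]
    exact hg v hBv
  rw [Submodule.orthogonal_orthogonal] at hmem
  obtain ⟨ξ, hξ⟩ := hmem
  exact ⟨ξ, by have := congrArg WithLp.ofLp hξ; exact this⟩

private lemma ILSE_expand {p q n : ℕ} (A : Matrix (Fin p ⊕ Fin q) (Fin n) ℝ)
    (b : Fin p ⊕ Fin q → ℝ) (Sig : Matrix (Fin p ⊕ Fin q) (Fin p ⊕ Fin q) ℝ)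
    (hS : Sigᵀ = Sig) (x h : Fin n → ℝ) :
    (b - A.mulVec (x + h)) ⬝ᵥ Sig.mulVec (b - A.mulVec (x + h)) =
      (b - A.mulVec x) ⬝ᵥ Sig.mulVec (b - A.mulVec x)
        - 2 * (h ⬝ᵥ Aᵀ.mulVec (Sig.mulVec (b - A.mulVec x)))
        + h ⬝ᵥ (Aᵀ * Sig * A).mulVec h := by
  set r := b - A.mulVec x with hr
  have h1 : b - A.mulVec (x + h) = r - A.mulVec h := by
    rw [Matrix.mulVec_add, hr]; abel
  have key : ∀ u : Fin p ⊕ Fin q → ℝ, (A.mulVec h) ⬝ᵥ Sig.mulVec u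
      = h ⬝ᵥ Aᵀ.mulVec (Sig.mulVec u) := by
    intro u
    rw [Matrix.dotProduct_mulVec h Aᵀ, Matrix.vecMul_transpose]
  have key2 : r ⬝ᵥ Sig.mulVec (A.mulVec h) = h ⬝ᵥ Aᵀ.mulVec (Sig.mulVec r) := by
    rw [Matrix.dotProduct_mulVec, ← Matrix.mulVec_transpose, hS,
      dotProduct_comm, key]
  have key3 : (A.mulVec h) ⬝ᵥ Sig.mulVec (A.mulVec h) = h ⬝ᵥ (Aᵀ * Sig * A).mulVec h := by
    rw [key, ← Matrix.mulVec_mulVec, ← Matrix.mulVec_mulVec]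
  rw [h1]
  simp only [Matrix.mulVec_sub, sub_dotProduct, dotProduct_sub]
  rw [key3, key2, key r]
  ring

/-- Under `rank(B) = s` and positivity of `x ↦ xᵀAᵀΣ_{pq}Ax` on the null space of `B`,
a vector `x` solves the ILSE problem `min (b-Ax)ᵀΣ(b-Ax) s.t. Bx = d` if and only if
`Bx = d` and there exists `ξ ∈ ℝ^s` with `AᵀΣ(b-Ax) = Bᵀξ`. -/
theorem ILSE_optimality_iff_normal_equations (p q n s : ℕ) (hmn : n ≤ p + q)
    (A : Matrix (Fin p ⊕ Fin q) (Fin n) ℝ) (b : Fin p ⊕ Fin q → ℝ)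
    (B : Matrix (Fin s) (Fin n) ℝ) (d : Fin s → ℝ)
    (Sig : Matrix (Fin p ⊕ Fin q) (Fin p ⊕ Fin q) ℝ)
    (hSig : Sig = Matrix.fromBlocks (1 : Matrix (Fin p) (Fin p) ℝ) 0 0
      (-(1 : Matrix (Fin q) (Fin q) ℝ)))
    (hrank : B.rank = s)
    (hpos : ∀ x : Fin n → ℝ, B.mulVec x = 0 → x ≠ 0 →
      0 < x ⬝ᵥ (Aᵀ * Sig * A).mulVec x)
    (x : Fin n → ℝ) :
    (B.mulVec x = d ∧ ∀ z : Fin n → ℝ, B.mulVec z = d →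
        (b - A.mulVec x) ⬝ᵥ Sig.mulVec (b - A.mulVec x) ≤
          (b - A.mulVec z) ⬝ᵥ Sig.mulVec (b - A.mulVec z)) ↔
      (B.mulVec x = d ∧ ∃ ξ : Fin s → ℝ,
        Aᵀ.mulVec (Sig.mulVec (b - A.mulVec x)) = Bᵀ.mulVec ξ) := by
  have hSym : Sigᵀ = Sig := by
    subst hSig
    simp [Matrix.fromBlocks_transpose]
  set r := b - A.mulVec x with hr
  set g := Aᵀ.mulVec (Sig.mulVec r) with hgdef
  constructor
  · rintro ⟨hBx, hopt⟩
    refine ⟨hBx, ?_⟩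
    have horth : ∀ h : Fin n → ℝ, B.mulVec h = 0 → h ⬝ᵥ g = 0 := by
      intro h hh
      rcases eq_or_ne h 0 with h0 | hne
      · subst h0; simp
      · set c := h ⬝ᵥ g with hc
        set m := h ⬝ᵥ (Aᵀ * Sig * A).mulVec h with hm
        have hmpos : 0 < m := hpos h hh hne
        set t := c / m with ht
        have hz : B.mulVec (x + t • h) = d := by
          rw [Matrix.mulVec_add, Matrix.mulVec_smul, hh, hBx]
          simp
        have hle := hopt (x + t • h) hz
        rw [ILSE_expand A b Sig hSym x (t • h)] at hle
        have hcross : (t • h) ⬝ᵥ g = t * c := by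
          rw [smul_dotProduct]; rfl
        have hquad : (t • h) ⬝ᵥ (Aᵀ * Sig * A).mulVec (t • h) = t * (t * m) := by
          rw [smul_dotProduct, Matrix.mulVec_smul, dotProduct_smul]
          rfl
        rw [← hr, ← hgdef, hcross, hquad] at hle
        have h2 : 0 ≤ -2 * (t * c) + t * (t * m) := by linarith
        have hm0 : m ≠ 0 := ne_of_gt hmpos
        rw [ht] at h2
        have h4 : -2 * (c / m * c) + c / m * (c / m * m) = -(c ^ 2 / m) := by
          field_simp; ring
        rw [h4] at h2
        have hc2 : c ^ 2 ≤ 0 := by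
          by_contra hcon
          push_neg at hcon
          exact absurd (div_pos hcon hmpos) (by linarith)
        exact sq_eq_zero_iff.mp (le_antisymm hc2 (sq_nonneg c))
    exact ILSE_key n s B g horth |>.imp fun ξ hξ => hξ.symm
  · rintro ⟨hBx, ξ, hξ⟩
    refine ⟨hBx, fun z hz => ?_⟩
    set h := z - x with hh
    have hzx : z = x + h := by rw [hh]; abel
    have hBh : B.mulVec h = 0 := by
      rw [hh, Matrix.mulVec_sub, hz, hBx, sub_self]
    have hcross : h ⬝ᵥ g = 0 := by
      rw [hξ, Matrix.dotProduct_mulVec h Bᵀ, Matrix.vecMul_transpose, hBh,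
        zero_dotProduct]
    have hquad : 0 ≤ h ⬝ᵥ (Aᵀ * Sig * A).mulVec h := by
      rcases eq_or_ne h 0 with h0 | hne
      · rw [h0]; simp
      · exact le_of_lt (hpos h hBh hne)
    rw [hzx, ILSE_expand A b Sig hSym x h, ← hr]
    rw [← hgdef] at *
    linarith
end

section
/- If r_y = b - Ay ≠ 0, then for every ξ ∈ ℝ^s the matrix J(ξ) = [[I_n⊗(r_yᵀΣ_{pq}) - AᵀΣ_{pq}(yᵀ⊗I_m), θ₁⁻¹AᵀΣ_{pq}, -θ₂⁻¹(I_n⊗ξᵀ), 0], [0, 0, θ₂⁻¹(yᵀ⊗I_s), -θ₃⁻¹I_s]] has full row rank n+s. -/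
open Matrix Kronecker

/-- A vector `v ∈ ℝ^κ` viewed as the row matrix `vᵀ ∈ ℝ^{1×κ}`. -/
def rowM {κ : Type*} (v : κ → ℝ) : Matrix Unit κ ℝ := fun _ j => v j

/-- If `r_y = b - Ay ≠ 0`, then for every `ξ ∈ ℝ^s` the matrix
`J(ξ) = [[I_n⊗(r_yᵀΣ) - AᵀΣ(yᵀ⊗I_m), θ₁⁻¹AᵀΣ, -θ₂⁻¹(I_n⊗ξᵀ), 0],
         [0, 0, θ₂⁻¹(yᵀ⊗I_s), -θ₃⁻¹I_s]] ∈ ℝ^{(n+s)×(nm+m+ns+s)}`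
(with `Σ = diag(I_p, -I_q)`, `m = p+q`, indexed by `Fin p ⊕ Fin q`) has full row
rank `n + s`. -/
theorem J_full_row_rank (p q n s : ℕ)
    (A : Matrix (Fin p ⊕ Fin q) (Fin n) ℝ) (b : Fin p ⊕ Fin q → ℝ) (y : Fin n → ℝ)
    (ξ : Fin s → ℝ) (θ₁ θ₂ θ₃ : ℝ) (hθ₁ : 0 < θ₁) (hθ₂ : 0 < θ₂) (hθ₃ : 0 < θ₃)
    (Sig : Matrix (Fin p ⊕ Fin q) (Fin p ⊕ Fin q) ℝ)
    (hSig : Sig = Matrix.fromBlocks (1 : Matrix (Fin p) (Fin p) ℝ) 0 0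
      (-(1 : Matrix (Fin q) (Fin q) ℝ)))
    (hry : b - A.mulVec y ≠ 0) :
    (Matrix.fromBlocks
      (Matrix.fromCols
        (Matrix.reindex (Equiv.prodPUnit (Fin n))
            (Equiv.refl (Fin n × (Fin p ⊕ Fin q)))
            ((1 : Matrix (Fin n) (Fin n) ℝ) ⊗ₖ rowM (Matrix.vecMul (b - A.mulVec y) Sig)) -
          Aᵀ * Sig *
            Matrix.reindex (Equiv.punitProd (Fin p ⊕ Fin q))
              (Equiv.refl (Fin n × (Fin p ⊕ Fin q)))
              (rowM y ⊗ₖ (1 : Matrix (Fin p ⊕ Fin q) (Fin p ⊕ Fin q) ℝ)))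
        (θ₁⁻¹ • (Aᵀ * Sig)))
      (Matrix.fromCols
        (-(θ₂⁻¹ • Matrix.reindex (Equiv.prodPUnit (Fin n)) (Equiv.refl (Fin n × Fin s))
            ((1 : Matrix (Fin n) (Fin n) ℝ) ⊗ₖ rowM ξ)))
        (0 : Matrix (Fin n) (Fin s) ℝ))
      (Matrix.fromCols (0 : Matrix (Fin s) (Fin n × (Fin p ⊕ Fin q)) ℝ)
        (0 : Matrix (Fin s) (Fin p ⊕ Fin q) ℝ))
      (Matrix.fromCols
        (θ₂⁻¹ • Matrix.reindex (Equiv.punitProd (Fin s)) (Equiv.refl (Fin n × Fin s))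
          (rowM y ⊗ₖ (1 : Matrix (Fin s) (Fin s) ℝ)))
        (-(θ₃⁻¹ • (1 : Matrix (Fin s) (Fin s) ℝ))))).rank = n + s := by
  classical
  set r : (Fin p ⊕ Fin q) → ℝ := b - A.mulVec y with hr
  set J := (Matrix.fromBlocks
      (Matrix.fromCols
        (Matrix.reindex (Equiv.prodPUnit (Fin n))
            (Equiv.refl (Fin n × (Fin p ⊕ Fin q)))
            ((1 : Matrix (Fin n) (Fin n) ℝ) ⊗ₖ rowM (Matrix.vecMul r Sig)) -
          Aᵀ * Sig *
            Matrix.reindex (Equiv.punitProd (Fin p ⊕ Fin q))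
              (Equiv.refl (Fin n × (Fin p ⊕ Fin q)))
              (rowM y ⊗ₖ (1 : Matrix (Fin p ⊕ Fin q) (Fin p ⊕ Fin q) ℝ)))
        (θ₁⁻¹ • (Aᵀ * Sig)))
      (Matrix.fromCols
        (-(θ₂⁻¹ • Matrix.reindex (Equiv.prodPUnit (Fin n)) (Equiv.refl (Fin n × Fin s))
            ((1 : Matrix (Fin n) (Fin n) ℝ) ⊗ₖ rowM ξ)))
        (0 : Matrix (Fin n) (Fin s) ℝ))
      (Matrix.fromCols (0 : Matrix (Fin s) (Fin n × (Fin p ⊕ Fin q)) ℝ)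
        (0 : Matrix (Fin s) (Fin p ⊕ Fin q) ℝ))
      (Matrix.fromCols
        (θ₂⁻¹ • Matrix.reindex (Equiv.punitProd (Fin s)) (Equiv.refl (Fin n × Fin s))
          (rowM y ⊗ₖ (1 : Matrix (Fin s) (Fin s) ℝ)))
        (-(θ₃⁻¹ • (1 : Matrix (Fin s) (Fin s) ℝ))))) with hJ
  have hSig2 : Sig * Sig = 1 := by
    subst hSig; simp [Matrix.fromBlocks_multiply]
  have hwne : Matrix.vecMul r Sig ≠ 0 := by
    intro h
    apply hry
    have : Matrix.vecMul (Matrix.vecMul r Sig) Sig = r := by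
      rw [Matrix.vecMul_vecMul, hSig2, Matrix.vecMul_one]
    rw [h] at this
    simpa [Matrix.zero_vecMul] using this.symm
  obtain ⟨j₀, hj₀⟩ := Function.ne_iff.mp hwne
  have hli : LinearIndependent ℝ (fun i => J i) := by
    change LinearIndependent ℝ J.row
    rw [← Matrix.vecMul_injective_iff, ← Matrix.coe_vecMulLinear,
      ← LinearMap.ker_eq_bot, LinearMap.ker_eq_bot']
    intro u hu
    simp only [Matrix.vecMulLinear_apply] at hu
    -- s-part vanishes
    have h3 : ∀ t : Fin s, u (Sum.inr t) = 0 := by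
      intro t
      have := congr_fun hu (Sum.inr (Sum.inr t))
      simp [hJ, Matrix.vecMul, dotProduct, Fintype.sum_sum_type,
        Matrix.fromBlocks, Matrix.fromCols, Matrix.one_apply, mul_ite,
        Finset.sum_ite_eq'] at this
      exact this.resolve_right hθ₃.ne'
    have h2 : ∀ j, ∑ i : Fin n, u (Sum.inl i) * (Aᵀ * Sig) i j = 0 := by
      intro j
      have := congr_fun hu (Sum.inl (Sum.inr j))
      simp [hJ, Matrix.vecMul, dotProduct, Fintype.sum_sum_type,
        Matrix.fromBlocks, Matrix.fromCols, Matrix.one_apply, mul_ite,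
        Finset.sum_ite_eq', h3] at this
      have h' : θ₁⁻¹ * ∑ i : Fin n, u (Sum.inl i) * (Aᵀ * Sig) i j = 0 := by
        rw [Finset.mul_sum]; rw [← this]; congr 1; ext i; ring
      rcases mul_eq_zero.mp h' with h | h
      · exact absurd h (inv_ne_zero hθ₁.ne')
      · exact h
    have h1 : ∀ k : Fin n, u (Sum.inl k) = 0 := by
      intro k
      have := congr_fun hu (Sum.inl (Sum.inl (k, j₀)))
      simp [hJ, Matrix.vecMul, dotProduct, Fintype.sum_sum_type,
        Matrix.fromBlocks, Matrix.fromCols, Matrix.one_apply, mul_ite,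
        Matrix.mul_apply, Matrix.sub_apply, Finset.sum_ite_eq', h3] at this
      have hC : ∀ x : Fin n, (Aᵀ * Sig) x j₀ =
          ∑ a₁ : Fin p, A (Sum.inl a₁) x * Sig (Sum.inl a₁) j₀ +
          ∑ a₂ : Fin q, A (Sum.inr a₂) x * Sig (Sum.inr a₂) j₀ := by
        intro x
        rw [Matrix.mul_apply, Fintype.sum_sum_type]
        simp [Matrix.transpose_apply]
      simp only [← hC, rowM] at this
      have e : ∑ x : Fin n, u (Sum.inl x) *
            ((if x = k then (Matrix.vecMul r Sig) j₀ else 0) - (Aᵀ * Sig) x j₀ * y k)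
          = u (Sum.inl k) * (Matrix.vecMul r Sig) j₀
            - y k * ∑ x : Fin n, u (Sum.inl x) * (Aᵀ * Sig) x j₀ := by
        calc ∑ x : Fin n, u (Sum.inl x) *
              ((if x = k then (Matrix.vecMul r Sig) j₀ else 0) - (Aᵀ * Sig) x j₀ * y k)
            = ∑ x : Fin n, ((if x = k then u (Sum.inl x) * (Matrix.vecMul r Sig) j₀ else 0)
                - y k * (u (Sum.inl x) * (Aᵀ * Sig) x j₀)) := by
              refine Finset.sum_congr rfl fun x _ => ?_
              split <;> ring
          _ = _ := by
              rw [Finset.sum_sub_distrib, ← Finset.mul_sum]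
              simp [Finset.sum_ite_eq']
      rw [e, h2 j₀, mul_zero, sub_zero] at this
      rcases mul_eq_zero.mp this with h | h
      · exact h
      · exact absurd h (by simpa using hj₀)
    funext i
    rcases i with i | t
    · exact h1 i
    · exact h3 t
  have := (show LinearIndependent ℝ J.row from hli).rank_matrix
  rw [hJ] at this ⊢
  rw [this]
  simp
end

section
/- Let K = [I_n⊗(r_yᵀΣ_{pq}) - AᵀΣ_{pq}(yᵀ⊗I_m), θ₁⁻¹AᵀΣ_{pq}] ∈ ℝ^{n×(n+1)m}. Then KKᵀ = (θ₁⁻² + ‖y‖₂²)·[(A - r_y y₀ᵀ)ᵀ(A - r_y y₀ᵀ) + (‖r_y‖₂²/(θ₁⁻²+‖y‖₂²))I_n - (r_y y₀ᵀ)ᵀ(r_y y₀ᵀ)], where y₀ = y/(θ₁⁻²+‖y‖₂²). -/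
open Matrix Kronecker

noncomputable def enorm2 {ι : Type*} [Fintype ι] (v : ι → ℝ) : ℝ :=
  Real.sqrt (∑ i, v i ^ 2)

section aux
variable {m n : ℕ}

lemma enorm2_sq {ι : Type*} [Fintype ι] (v : ι → ℝ) : enorm2 v ^ 2 = ∑ i, v i ^ 2 := by
  rw [enorm2, Real.sq_sqrt (Finset.sum_nonneg fun i _ => sq_nonneg _)]

lemma PPt (s : Fin m → ℝ) :
    (Matrix.reindex (Equiv.prodPUnit (Fin n)) (Equiv.refl (Fin n × Fin m))
        ((1 : Matrix (Fin n) (Fin n) ℝ) ⊗ₖ rowM s)) *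
      (Matrix.reindex (Equiv.prodPUnit (Fin n)) (Equiv.refl (Fin n × Fin m))
        ((1 : Matrix (Fin n) (Fin n) ℝ) ⊗ₖ rowM s))ᵀ = (∑ l, s l ^ 2) • 1 := by
  ext i j
  simp [Matrix.mul_apply, Fintype.sum_prod_type, rowM, Matrix.one_apply, ite_and,
    Finset.mul_sum, Finset.sum_ite_eq', mul_comm, sq, smul_eq_mul]

lemma PRt (s : Fin m → ℝ) (y : Fin n → ℝ) :
    (Matrix.reindex (Equiv.prodPUnit (Fin n)) (Equiv.refl (Fin n × Fin m))
        ((1 : Matrix (Fin n) (Fin n) ℝ) ⊗ₖ rowM s)) *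
      (Matrix.reindex (Equiv.punitProd (Fin m)) (Equiv.refl (Fin n × Fin m))
        (rowM y ⊗ₖ (1 : Matrix (Fin m) (Fin m) ℝ)))ᵀ = Matrix.vecMulVec y s := by
  ext i j
  simp [Matrix.mul_apply, Fintype.sum_prod_type, rowM, Matrix.one_apply, ite_and,
    Matrix.vecMulVec, Finset.sum_ite_eq', mul_comm]

lemma RRt (y : Fin n → ℝ) :
    (Matrix.reindex (Equiv.punitProd (Fin m)) (Equiv.refl (Fin n × Fin m))
        (rowM y ⊗ₖ (1 : Matrix (Fin m) (Fin m) ℝ))) *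
      (Matrix.reindex (Equiv.punitProd (Fin m)) (Equiv.refl (Fin n × Fin m))
        (rowM y ⊗ₖ (1 : Matrix (Fin m) (Fin m) ℝ)))ᵀ = (∑ k, y k ^ 2) • 1 := by
  ext i j
  simp [Matrix.mul_apply, Fintype.sum_prod_type, rowM, Matrix.one_apply, ite_and,
    Finset.mul_sum, Finset.sum_ite_eq', mul_comm, sq, smul_eq_mul]

lemma vecMulVec_mul' {m n p : ℕ} (a : Fin m → ℝ) (b : Fin n → ℝ) (M : Matrix (Fin n) (Fin p) ℝ) :
    Matrix.vecMulVec a b * M = Matrix.vecMulVec a (Matrix.vecMul b M) := by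
  ext i j
  simp [Matrix.mul_apply, Matrix.vecMulVec, Matrix.vecMul, dotProduct,
    Finset.mul_sum, mul_assoc]

end aux

/-- Let `K = [I_n⊗(r_yᵀΣ) - AᵀΣ(yᵀ⊗I_m), θ₁⁻¹AᵀΣ] ∈ ℝ^{n×(n+1)m}`, with `Σ` symmetric and
`Σ² = I_m`.  Then
`KKᵀ = (θ₁⁻² + ‖y‖₂²)·[(A - r_y y₀ᵀ)ᵀ(A - r_y y₀ᵀ) + (‖r_y‖₂²/(θ₁⁻²+‖y‖₂²))I_n
        - (r_y y₀ᵀ)ᵀ(r_y y₀ᵀ)]`, where `y₀ = y/(θ₁⁻²+‖y‖₂²)`. -/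
theorem KKt_identity (m n : ℕ)
    (A : Matrix (Fin m) (Fin n) ℝ) (ry : Fin m → ℝ) (y : Fin n → ℝ)
    (θ₁ : ℝ) (hθ₁ : 0 < θ₁)
    (Sig : Matrix (Fin m) (Fin m) ℝ) (hSymm : Sigᵀ = Sig) (hInv : Sig * Sig = 1) :
    (Matrix.fromCols
        (Matrix.reindex (Equiv.prodPUnit (Fin n)) (Equiv.refl (Fin n × Fin m))
            ((1 : Matrix (Fin n) (Fin n) ℝ) ⊗ₖ rowM (Matrix.vecMul ry Sig)) -
          Aᵀ * Sig *
            Matrix.reindex (Equiv.punitProd (Fin m)) (Equiv.refl (Fin n × Fin m))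
              (rowM y ⊗ₖ (1 : Matrix (Fin m) (Fin m) ℝ)))
        (θ₁⁻¹ • (Aᵀ * Sig))) *
      (Matrix.fromCols
        (Matrix.reindex (Equiv.prodPUnit (Fin n)) (Equiv.refl (Fin n × Fin m))
            ((1 : Matrix (Fin n) (Fin n) ℝ) ⊗ₖ rowM (Matrix.vecMul ry Sig)) -
          Aᵀ * Sig *
            Matrix.reindex (Equiv.punitProd (Fin m)) (Equiv.refl (Fin n × Fin m))
              (rowM y ⊗ₖ (1 : Matrix (Fin m) (Fin m) ℝ)))
        (θ₁⁻¹ • (Aᵀ * Sig)))ᵀ =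
    (θ₁⁻¹ ^ 2 + enorm2 y ^ 2) •
      ((A - Matrix.vecMulVec ry ((θ₁⁻¹ ^ 2 + enorm2 y ^ 2)⁻¹ • y))ᵀ *
          (A - Matrix.vecMulVec ry ((θ₁⁻¹ ^ 2 + enorm2 y ^ 2)⁻¹ • y)) +
        (enorm2 ry ^ 2 / (θ₁⁻¹ ^ 2 + enorm2 y ^ 2)) • (1 : Matrix (Fin n) (Fin n) ℝ) -
        (Matrix.vecMulVec ry ((θ₁⁻¹ ^ 2 + enorm2 y ^ 2)⁻¹ • y))ᵀ *
          Matrix.vecMulVec ry ((θ₁⁻¹ ^ 2 + enorm2 y ^ 2)⁻¹ • y)) := by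
  have hy2 : enorm2 y ^ 2 = ∑ i, y i ^ 2 := enorm2_sq y
  have hr2 : enorm2 ry ^ 2 = ∑ i, ry i ^ 2 := enorm2_sq ry
  have hcpos : 0 < θ₁⁻¹ ^ 2 + enorm2 y ^ 2 := by
    have h1 : 0 < θ₁⁻¹ ^ 2 := by positivity
    nlinarith [sq_nonneg (enorm2 y)]
  have hc0 : θ₁⁻¹ ^ 2 + enorm2 y ^ 2 ≠ 0 := ne_of_gt hcpos
  set s : Fin m → ℝ := Matrix.vecMul ry Sig with hs
  -- vecMul s Sig = ry
  have hsS : Matrix.vecMul s Sig = ry := by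
    rw [hs, Matrix.vecMul_vecMul, hInv, Matrix.vecMul_one]
  have hssq : (∑ l, s l ^ 2) = ∑ l, ry l ^ 2 := by
    have h1 : ∑ l, s l ^ 2 = s ⬝ᵥ Matrix.vecMul ry Sig := by
      simp [dotProduct, sq, hs]
    rw [h1, ← Matrix.mulVec_transpose, dotProduct_mulVec, hSymm, hsS]
    simp [dotProduct, sq]
  set P := Matrix.reindex (Equiv.prodPUnit (Fin n)) (Equiv.refl (Fin n × Fin m))
      ((1 : Matrix (Fin n) (Fin n) ℝ) ⊗ₖ rowM s) with hP
  set R := Matrix.reindex (Equiv.punitProd (Fin m)) (Equiv.refl (Fin n × Fin m))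
      (rowM y ⊗ₖ (1 : Matrix (Fin m) (Fin m) ℝ)) with hR
  set V := Matrix.vecMulVec y (Matrix.vecMul ry A) with hV
  set Q := Aᵀ * Sig * R with hQ
  have hPP : P * Pᵀ = (∑ l, ry l ^ 2) • (1 : Matrix (Fin n) (Fin n) ℝ) := by
    rw [hP, PPt, hssq]
  have hPQ : P * Qᵀ = V := by
    rw [hQ, Matrix.transpose_mul, Matrix.transpose_mul, hSymm, ← Matrix.mul_assoc,
      ← Matrix.mul_assoc, hP, hR, PRt]
    rw [Matrix.transpose_transpose, vecMulVec_mul', hsS, vecMulVec_mul', hV]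
  have hQQ : Q * Qᵀ = (∑ k, y k ^ 2) • (Aᵀ * A) := by
    rw [hQ, Matrix.transpose_mul, Matrix.transpose_mul, hSymm, Matrix.transpose_transpose]
    calc Aᵀ * Sig * R * (Rᵀ * (Sig * A)) = Aᵀ * Sig * (R * Rᵀ) * (Sig * A) := by
          simp [Matrix.mul_assoc]
      _ = (∑ k, y k ^ 2) • (Aᵀ * A) := by
          rw [hR, RRt, Matrix.mul_smul, Matrix.smul_mul]
          congr 1
          calc Aᵀ * Sig * (1 : Matrix (Fin m) (Fin m) ℝ) * (Sig * A)
              = Aᵀ * (Sig * Sig) * A := by simp [Matrix.mul_assoc]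
            _ = Aᵀ * A := by rw [hInv]; simp
  have hNN : (θ₁⁻¹ • (Aᵀ * Sig)) * (θ₁⁻¹ • (Aᵀ * Sig))ᵀ = (θ₁⁻¹ ^ 2) • (Aᵀ * A) := by
    rw [Matrix.transpose_smul, Matrix.transpose_mul, hSymm, Matrix.transpose_transpose,
      Matrix.smul_mul, Matrix.mul_smul, smul_smul, ← sq]
    congr 1
    calc Aᵀ * Sig * (Sig * A) = Aᵀ * (Sig * Sig) * A := by simp [Matrix.mul_assoc]
      _ = Aᵀ * A := by rw [hInv]; simp
  rw [Matrix.transpose_fromCols, Matrix.fromCols_mul_fromRows, Matrix.transpose_sub,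
    Matrix.sub_mul, Matrix.mul_sub, Matrix.mul_sub, hPP, hPQ, hQQ, hNN]
  have hQP : Q * Pᵀ = Vᵀ := by
    rw [← Matrix.transpose_transpose Q, ← Matrix.transpose_mul, hPQ]
  rw [hQP]
  -- RHS side
  have hAV : Aᵀ * Matrix.vecMulVec ry y = Vᵀ := by
    ext i j
    simp only [Matrix.mul_apply, Matrix.vecMulVec_apply, Matrix.transpose_apply, hV,
      Matrix.vecMul, dotProduct, Finset.sum_mul, Finset.mul_sum]
    exact Finset.sum_congr rfl fun k _ => by ring
  have hWA : (Matrix.vecMulVec ry y)ᵀ * A = V := by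
    simpa using congrArg Matrix.transpose hAV
  have hsmul : Matrix.vecMulVec ry ((θ₁⁻¹ ^ 2 + enorm2 y ^ 2)⁻¹ • y)
      = (θ₁⁻¹ ^ 2 + enorm2 y ^ 2)⁻¹ • Matrix.vecMulVec ry y := by
    ext i j; simp [Matrix.vecMulVec]; ring
  rw [hsmul, Matrix.transpose_smul, Matrix.transpose_sub, Matrix.transpose_smul,
    Matrix.sub_mul, Matrix.mul_sub, Matrix.mul_sub, Matrix.smul_mul, Matrix.smul_mul,
    Matrix.mul_smul, Matrix.mul_smul, smul_smul, hAV, hWA, hr2, hy2]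
  match_scalars <;> field_simp <;> ring
end

section
/- If r_y ≠ 0, then the smallest singular value α of the matrix K = [I_n⊗(r_yᵀΣ_{pq}) - AᵀΣ_{pq}(yᵀ⊗I_m), θ₁⁻¹AᵀΣ_{pq}] satisfies α ≥ ‖r_y‖₂ / √(1 + θ₁²‖y‖₂²). -/
open Matrix Kronecker

/-- The smallest singular value of a (wide) matrix `K ∈ ℝ^{n×κ}`: the minimum of
`‖Kᵀu‖₂` over unit vectors `u ∈ ℝ^n`. -/
noncomputable def sigmaMin {n : ℕ} {κ : Type*} [Fintype κ]
    (K : Matrix (Fin n) κ ℝ) : ℝ :=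
  sInf {c | ∃ u : Fin n → ℝ, enorm2 u = 1 ∧ c = enorm2 (Matrix.vecMul u K)}

lemma dot_sig {m : ℕ} (Sig : Matrix (Fin m) (Fin m) ℝ) (hSymm : Sigᵀ = Sig)
    (hInv : Sig * Sig = 1) (a b : Fin m → ℝ) :
    (Sig *ᵥ a) ⬝ᵥ (Sig *ᵥ b) = a ⬝ᵥ b := by
  rw [Matrix.dotProduct_mulVec]
  have h1 : Sig *ᵥ a = a ᵥ* Sigᵀ := by rw [Matrix.vecMul_transpose]
  rw [h1, Matrix.vecMul_vecMul, hSymm, hInv, Matrix.vecMul_one]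

lemma sum_prod_mul {n m : ℕ} (f : Fin n → ℝ) (g : Fin m → ℝ) :
    ∑ p : Fin n × Fin m, f p.1 * g p.2 = (∑ j, f j) * (∑ i, g i) := by
  rw [Finset.sum_mul_sum, Fintype.sum_prod_type]

lemma key_ineq (Y2 R2 C P T b bi : ℝ) (hY2 : 0 ≤ Y2) (hR2 : 0 ≤ R2) (hC : 0 ≤ C)
    (hb : 0 < b) (hbi : b * bi = 1) (hP : P ^ 2 ≤ Y2) (hT : T ^ 2 ≤ R2 * C) :
    R2 ≤ (R2 - 2 * P * T + (Y2 + bi) * C) * (1 + b * Y2) := by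
  have hPT : P ^ 2 * T ^ 2 ≤ Y2 * (R2 * C) := mul_le_mul hP hT (sq_nonneg T) hY2
  have hZ : (0:ℝ) < 1 + b * Y2 := by nlinarith
  have hX : 0 ≤ b ^ 2 * Y2 * R2 := by positivity
  have hW : 0 ≤ (1 + b * Y2) ^ 2 * C := by positivity
  have hscale : b ^ 2 * (1 + b * Y2) ^ 2 * (P ^ 2 * T ^ 2)
      ≤ b ^ 2 * (1 + b * Y2) ^ 2 * (Y2 * (R2 * C)) := by
    apply mul_le_mul_of_nonneg_left hPT; positivity
  have h1 : (2 * b * (1 + b * Y2) * (P * T)) ^ 2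
      ≤ (b ^ 2 * Y2 * R2 + (1 + b * Y2) ^ 2 * C) ^ 2 := by
    nlinarith [sq_nonneg (b ^ 2 * Y2 * R2 - (1 + b * Y2) ^ 2 * C)]
  have habs : 2 * b * (1 + b * Y2) * (P * T) ≤ b ^ 2 * Y2 * R2 + (1 + b * Y2) ^ 2 * C := by
    nlinarith [h1, sq_nonneg (2 * b * (1 + b * Y2) * (P * T) + (b ^ 2 * Y2 * R2 + (1 + b * Y2) ^ 2 * C))]
  have h2 : b * R2 ≤ (b * R2 - 2 * b * (P * T) + (b * Y2 + 1) * C) * (1 + b * Y2) := by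
    nlinarith [habs]
  have h3 : (R2 - 2 * P * T + (Y2 + bi) * C) * (1 + b * Y2) * b
      = (b * R2 - 2 * b * (P * T) + (b * Y2 + 1) * C) * (1 + b * Y2) := by
    linear_combination (C * (1 + b * Y2)) * hbi
  have h4 := h2.trans_eq h3.symm
  have h5 : R2 * b ≤ (R2 - 2 * P * T + (Y2 + bi) * C) * (1 + b * Y2) * b := by
    linarith [h4]
  exact le_of_mul_le_mul_right h5 hb

/-- If `r_y ≠ 0`, the smallest singular value `α` of
`K = [I_n⊗(r_yᵀΣ) - AᵀΣ(yᵀ⊗I_m), θ₁⁻¹AᵀΣ]` (with `Σ` symmetric, `Σ² = I_m`) satisfies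
`α ≥ ‖r_y‖₂ / √(1 + θ₁²‖y‖₂²)`. -/
theorem sigmaMin_lower_bound (m n : ℕ) (hn : 0 < n)
    (A : Matrix (Fin m) (Fin n) ℝ) (ry : Fin m → ℝ) (hry : ry ≠ 0) (y : Fin n → ℝ)
    (θ₁ : ℝ) (hθ₁ : 0 < θ₁)
    (Sig : Matrix (Fin m) (Fin m) ℝ) (hSymm : Sigᵀ = Sig) (hInv : Sig * Sig = 1) :
    enorm2 ry / Real.sqrt (1 + θ₁ ^ 2 * enorm2 y ^ 2) ≤
      sigmaMin (Matrix.fromCols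
        (Matrix.reindex (Equiv.prodPUnit (Fin n)) (Equiv.refl (Fin n × Fin m))
            ((1 : Matrix (Fin n) (Fin n) ℝ) ⊗ₖ rowM (Matrix.vecMul ry Sig)) -
          Aᵀ * Sig *
            Matrix.reindex (Equiv.punitProd (Fin m)) (Equiv.refl (Fin n × Fin m))
              (rowM y ⊗ₖ (1 : Matrix (Fin m) (Fin m) ℝ)))
        (θ₁⁻¹ • (Aᵀ * Sig))) := by
  have hR2nn : (0:ℝ) ≤ ∑ i, ry i ^ 2 := Finset.sum_nonneg fun _ _ => sq_nonneg _
  have hY2nn : (0:ℝ) ≤ ∑ j, y j ^ 2 := Finset.sum_nonneg fun _ _ => sq_nonneg _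
  apply le_csInf
  · -- nonemptiness via the first standard basis vector
    refine ⟨_, (fun j => if j = ⟨0, hn⟩ then (1:ℝ) else 0), ?_, rfl⟩
    unfold enorm2
    have h1 : ∑ i : Fin n, (if i = (⟨0, hn⟩ : Fin n) then (1:ℝ) else 0) ^ 2 = 1 := by
      simp [apply_ite, Finset.sum_ite_eq']
    rw [h1, Real.sqrt_one]
  · rintro c ⟨u, hu, rfl⟩
    have hu2 : ∑ j, u j ^ 2 = 1 := Real.sqrt_eq_one.mp hu
    set v : Fin m → ℝ := A *ᵥ u with hv
    -- rewrite the row-vector times matrix product explicitly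
    have hsv : ry ᵥ* Sig = Sig *ᵥ ry := by rw [← Matrix.mulVec_transpose, hSymm]
    have hwv : u ᵥ* (Aᵀ * Sig) = Sig *ᵥ v := by
      rw [← Matrix.mulVec_transpose, Matrix.transpose_mul, Matrix.transpose_transpose, hSymm,
        ← Matrix.mulVec_mulVec]
    have hK : Matrix.vecMul u (Matrix.fromCols
        (Matrix.reindex (Equiv.prodPUnit (Fin n)) (Equiv.refl (Fin n × Fin m))
            ((1 : Matrix (Fin n) (Fin n) ℝ) ⊗ₖ rowM (Matrix.vecMul ry Sig)) -
          Aᵀ * Sig *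
            Matrix.reindex (Equiv.punitProd (Fin m)) (Equiv.refl (Fin n × Fin m))
              (rowM y ⊗ₖ (1 : Matrix (Fin m) (Fin m) ℝ)))
        (θ₁⁻¹ • (Aᵀ * Sig)))
      = Sum.elim
          (fun p : Fin n × Fin m => u p.1 * (Sig *ᵥ ry) p.2 - y p.1 * (Sig *ᵥ v) p.2)
          (fun i => θ₁⁻¹ * (Sig *ᵥ v) i) := by
      rw [Matrix.vecMul_fromCols]
      funext p
      cases p with
      | inl p =>
        simp only [Sum.elim_inl, Matrix.vecMul_sub, Pi.sub_apply]
        rw [← Matrix.vecMul_vecMul, ← hsv, ← show u ᵥ* (Aᵀ * Sig) = Sig *ᵥ v from hwv]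
        simp [Matrix.vecMul, dotProduct, Matrix.reindex_apply, Matrix.submatrix_apply,
          Matrix.kroneckerMap_apply, Matrix.one_apply, rowM, mul_ite, ite_mul, mul_zero, zero_mul,
          Finset.sum_ite_eq, Finset.sum_ite_eq', mul_comm]
      | inr i =>
        rw [Sum.elim_inr, ← show u ᵥ* (Aᵀ * Sig) = Sig *ᵥ v from hwv]
        simp [Matrix.vecMul, dotProduct, Matrix.smul_apply, smul_eq_mul, Finset.mul_sum,
          mul_comm, mul_left_comm]
    rw [hK]
    -- value of the norm squared
    have hexp : ∑ p : Fin n × Fin m, (u p.1 * (Sig *ᵥ ry) p.2 - y p.1 * (Sig *ᵥ v) p.2) ^ 2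
        = (∑ j, u j ^ 2) * (∑ i, (Sig *ᵥ ry) i ^ 2)
          - 2 * ((∑ j, u j * y j) * (∑ i, (Sig *ᵥ ry) i * (Sig *ᵥ v) i))
          + (∑ j, y j ^ 2) * (∑ i, (Sig *ᵥ v) i ^ 2) := by
      have e1 : ∀ p : Fin n × Fin m,
          (u p.1 * (Sig *ᵥ ry) p.2 - y p.1 * (Sig *ᵥ v) p.2) ^ 2
          = u p.1 ^ 2 * (Sig *ᵥ ry) p.2 ^ 2
            - 2 * (u p.1 * y p.1 * ((Sig *ᵥ ry) p.2 * (Sig *ᵥ v) p.2))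
            + y p.1 ^ 2 * (Sig *ᵥ v) p.2 ^ 2 := fun p => by ring
      rw [Finset.sum_congr rfl fun p _ => e1 p, Finset.sum_add_distrib, Finset.sum_sub_distrib,
        ← Finset.mul_sum,
        sum_prod_mul (fun j => u j ^ 2) (fun i => (Sig *ᵥ ry) i ^ 2),
        sum_prod_mul (fun j => u j * y j) (fun i => (Sig *ᵥ ry) i * (Sig *ᵥ v) i),
        sum_prod_mul (fun j => y j ^ 2) (fun i => (Sig *ᵥ v) i ^ 2)]
    have hsecond : ∑ i, (θ₁⁻¹ * (Sig *ᵥ v) i) ^ 2 = θ₁⁻¹ ^ 2 * ∑ i, (Sig *ᵥ v) i ^ 2 := by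
      rw [Finset.mul_sum]; exact Finset.sum_congr rfl fun i _ => by ring
    -- dot-product identities from Σᵀ = Σ, Σ² = 1
    have hds : ∑ i, (Sig *ᵥ ry) i ^ 2 = ∑ i, ry i ^ 2 := by
      simpa [dotProduct, pow_two] using dot_sig Sig hSymm hInv ry ry
    have hdw : ∑ i, (Sig *ᵥ v) i ^ 2 = ∑ i, v i ^ 2 := by
      simpa [dotProduct, pow_two] using dot_sig Sig hSymm hInv v v
    have hdsw : ∑ i, (Sig *ᵥ ry) i * (Sig *ᵥ v) i = ∑ i, ry i * v i := by
      simpa [dotProduct] using dot_sig Sig hSymm hInv ry v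
    unfold enorm2
    rw [Fintype.sum_sum_type]
    simp only [Sum.elim_inl, Sum.elim_inr]
    rw [hexp, hsecond, hds, hdw, hdsw, hu2, one_mul]
    -- Cauchy–Schwarz
    have hCnn : (0:ℝ) ≤ ∑ i, v i ^ 2 := Finset.sum_nonneg fun _ _ => sq_nonneg _
    have hP : (∑ j, u j * y j) ^ 2 ≤ ∑ j, y j ^ 2 := by
      have h := Finset.sum_mul_sq_le_sq_mul_sq Finset.univ u y
      rw [hu2, one_mul] at h; exact h
    have hT : (∑ i, ry i * v i) ^ 2 ≤ (∑ i, ry i ^ 2) * (∑ i, v i ^ 2) :=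
      Finset.sum_mul_sq_le_sq_mul_sq Finset.univ ry v
    -- conclude
    have hden : (0:ℝ) < 1 + θ₁ ^ 2 * ∑ j, y j ^ 2 := by positivity
    rw [Real.sq_sqrt hY2nn, ← Real.sqrt_div hR2nn]
    apply Real.sqrt_le_sqrt
    rw [div_le_iff₀ hden]
    have hbi : θ₁ ^ 2 * θ₁⁻¹ ^ 2 = 1 := by
      field_simp
    have hmain := key_ineq (∑ j, y j ^ 2) (∑ i, ry i ^ 2) (∑ i, v i ^ 2)
      (∑ j, u j * y j) (∑ i, ry i * v i) (θ₁ ^ 2) (θ₁⁻¹ ^ 2)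
      hY2nn hR2nn hCnn (by positivity) hbi hP hT
    calc (∑ i, ry i ^ 2)
        ≤ ((∑ i, ry i ^ 2) - 2 * (∑ j, u j * y j) * (∑ i, ry i * v i)
            + ((∑ j, y j ^ 2) + θ₁⁻¹ ^ 2) * (∑ i, v i ^ 2)) * (1 + θ₁ ^ 2 * ∑ j, y j ^ 2) :=
          hmain
      _ = ((∑ i, ry i ^ 2) - 2 * ((∑ j, u j * y j) * (∑ i, ry i * v i))
            + (∑ j, y j ^ 2) * (∑ i, v i ^ 2) + θ₁⁻¹ ^ 2 * ∑ i, v i ^ 2)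
            * (1 + θ₁ ^ 2 * ∑ j, y j ^ 2) := by ring
end

section
/- If rank(B) = s and the quadratic form xᵀAᵀΣ_{pq}Ax is positive definite on the null space of B, then the solution of the augmented system [[0,0,B],[0,Σ_{pq},A],[Bᵀ,Aᵀ,0]]·(λ, s, x) = (d, b, 0) yields x solving the ILSE normal equations: with ξ = -λ and r = b - Ax, one has s = Σ_{pq}r, AᵀΣ_{pq}(b-Ax) = Bᵀξ, and Bx = d. -/
open Matrix

/-- If `rank(B) = s` and `xᵀAᵀΣAx > 0` on the null space of `B`, then a solution
`(λ, s, x)` of the augmented system `[[0,0,B],[0,Σ,A],[Bᵀ,Aᵀ,0]]·(λ,s,x) = (d,b,0)`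
yields a solution of the ILSE normal equations: with `ξ = -λ` and `r = b - Ax` one has
`s = Σr`, `AᵀΣ(b - Ax) = Bᵀξ` and `Bx = d`. -/
theorem augmented_system_gives_normal_equations (p q n s : ℕ)
    (A : Matrix (Fin p ⊕ Fin q) (Fin n) ℝ) (b : Fin p ⊕ Fin q → ℝ)
    (B : Matrix (Fin s) (Fin n) ℝ) (d : Fin s → ℝ)
    (Sig : Matrix (Fin p ⊕ Fin q) (Fin p ⊕ Fin q) ℝ)
    (hSig : Sig = Matrix.fromBlocks (1 : Matrix (Fin p) (Fin p) ℝ) 0 0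
      (-(1 : Matrix (Fin q) (Fin q) ℝ)))
    (hrank : B.rank = s)
    (hpos : ∀ x : Fin n → ℝ, B.mulVec x = 0 → x ≠ 0 →
      0 < x ⬝ᵥ (Aᵀ * Sig * A).mulVec x)
    (lam : Fin s → ℝ) (sv : Fin p ⊕ Fin q → ℝ) (x : Fin n → ℝ)
    (hsol : (Matrix.fromBlocks
        (Matrix.fromBlocks (0 : Matrix (Fin s) (Fin s) ℝ) 0 0 Sig)
        (Matrix.fromRows B A)
        (Matrix.fromCols Bᵀ Aᵀ)
        (0 : Matrix (Fin n) (Fin n) ℝ)).mulVec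
          (Sum.elim (Sum.elim lam sv) x) = Sum.elim (Sum.elim d b) 0) :
    sv = Sig.mulVec (b - A.mulVec x) ∧
      Aᵀ.mulVec (Sig.mulVec (b - A.mulVec x)) = Bᵀ.mulVec (-lam) ∧
      B.mulVec x = d := by
  rw [Matrix.fromBlocks_mulVec] at hsol
  have h1 := congrArg (fun f => f ∘ Sum.inl) hsol
  have h2 := congrArg (fun f => f ∘ Sum.inr) hsol
  simp only [Sum.elim_comp_inl, Sum.elim_comp_inr] at h1 h2
  rw [Matrix.fromBlocks_mulVec, Matrix.fromRows_mulVec] at h1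
  have hBx : B.mulVec x = d := by
    funext i
    have := congrFun h1 (Sum.inl i)
    simpa using this
  have hSv : Sig.mulVec sv + A.mulVec x = b := by
    funext i
    have := congrFun h1 (Sum.inr i)
    simpa using this
  have hSigSig : Sig * Sig = 1 := by
    rw [hSig]
    simp [Matrix.fromBlocks_multiply, Matrix.fromBlocks_one]
  have hsv : Sig.mulVec (b - A.mulVec x) = sv := by
    have : b - A.mulVec x = Sig.mulVec sv := by
      rw [← hSv]; abel
    rw [this, Matrix.mulVec_mulVec, hSigSig, Matrix.one_mulVec]
  have hBot : Bᵀ.mulVec lam + Aᵀ.mulVec sv = 0 := by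
    rw [Matrix.fromCols_mulVec_sumElim] at h2
    have : Bᵀ.mulVec lam + Aᵀ.mulVec sv + (0 : Matrix (Fin n) (Fin n) ℝ).mulVec x = 0 := h2
    simpa using this
  refine ⟨hsv.symm, ?_, hBx⟩
  rw [hsv, Matrix.mulVec_neg]
  have : Aᵀ.mulVec sv = -Bᵀ.mulVec lam := by
    rw [eq_neg_iff_add_eq_zero, add_comm]; exact hBot
  exact this
end
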